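/- Let C be a binary self-dual [48,24,10] code with a fixed-point-free automorphism σ of order 3 (sixteen 3-cycles). Then C_φ = φ(E_σ(C)^*) is a Hermitian self-dual code of length 16 and dimension 8 over F_4 (identified with the even-weight subring P of F_2[x]/(x^3-1)) with minimum distance at least 5, because each nonzero element of P corresponds to a binary triple of weight 2 and the minimum binary weight 10 forces 2·d(C_φ) ≥ 10. -/

import Mathlib

open scoped Classical

open Finset

/-- Hamming weight of a binary vector. -/
def wt {ι : Type*} [Fintype ι] (v : ι → ZMod 2) : ℕ :=
  (Finset.univ.filter fun i => v i ≠ 0).card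

/-- Dual of a binary code under the standard dot product. -/
def dualCode {ι : Type*} [Fintype ι] (C : Submodule (ZMod 2) (ι → ZMod 2)) :
    Submodule (ZMod 2) (ι → ZMod 2) where
  carrier := {x | ∀ c ∈ C, ∑ i, x i * c i = 0}
  add_mem' := by
    intro a b ha hb c hc
    have := ha c hc; have := hb c hc
    simp only [Pi.add_apply, add_mul, Finset.sum_add_distrib]
    simp [ha c hc, hb c hc]
  zero_mem' := by intro c hc; simp
  smul_mem' := by
    intro r a ha c hc
    simp only [Pi.smul_apply, smul_eq_mul, mul_assoc, ← Finset.mul_sum]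
    simp [ha c hc]

/-- Fixed subcode F_σ(C). -/
def fixedCode {ι : Type*} (σ : Equiv.Perm ι) (C : Submodule (ZMod 2) (ι → ZMod 2)) :
    Submodule (ZMod 2) (ι → ZMod 2) where
  carrier := {v | v ∈ C ∧ v ∘ σ = v}
  add_mem' := by
    rintro a b ⟨ha, ha'⟩ ⟨hb, hb'⟩
    refine ⟨C.add_mem ha hb, ?_⟩
    funext i
    simpa using congrFun (congrArg₂ (· + ·) ha' hb') i
  zero_mem' := ⟨C.zero_mem, rfl⟩
  smul_mem' := by
    rintro r a ⟨ha, ha'⟩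
    exact ⟨C.smul_mem r ha, by funext i; simpa using congrArg (r • ·) (congrFun ha' i)⟩

/-- Subcode E_σ(C): codewords with even weight on each cycle (and zero on fixed points). -/
def evenCode {ι : Type*} (p : ℕ) (σ : Equiv.Perm ι) (C : Submodule (ZMod 2) (ι → ZMod 2)) :
    Submodule (ZMod 2) (ι → ZMod 2) where
  carrier := {v | v ∈ C ∧ ∀ i, ∑ k ∈ Finset.range p, v ((σ ^ k) i) = 0}
  add_mem' := by
    rintro a b ⟨ha, ha'⟩ ⟨hb, hb'⟩
    refine ⟨C.add_mem ha hb, fun i => ?_⟩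
    simp [Finset.sum_add_distrib, ha' i, hb' i]
  zero_mem' := ⟨C.zero_mem, by simp⟩
  smul_mem' := by
    rintro r a ⟨ha, ha'⟩
    refine ⟨C.smul_mem r ha, fun i => ?_⟩
    simp only [Pi.smul_apply, smul_eq_mul]
    rw [← Finset.mul_sum, ha' i, mul_zero]

/-- Coordinate index set for an automorphism of type p-(c,f): `c` cycles of
length `p` followed by `f` fixed points. -/
abbrev Idx (p c f : ℕ) : Type := (Fin c × Fin p) ⊕ Fin f

/-- The standard permutation with `c` cycles of length `p` and `f` fixed points. -/
def stdPerm (p c f : ℕ) : Equiv.Perm (Idx p c f) :=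
  Equiv.sumCongr (Equiv.prodCongr (Equiv.refl (Fin c)) (finRotate p)) (Equiv.refl (Fin f))

/-- The projection π recording one bit per cycle and the fixed-point bits. -/
def proj (p c f : ℕ) [NeZero p] :
    (Idx p c f → ZMod 2) →ₗ[ZMod 2] ((Fin c ⊕ Fin f) → ZMod 2) where
  toFun v := Sum.elim (fun j => v (Sum.inl (j, 0))) (fun l => v (Sum.inr l))
  map_add' := by intro a b; funext i; cases i <;> simp
  map_smul' := by intro r a; funext i; cases i <;> simp

open Polynomial

/-- The ring F_2[x]/(x^p - 1). -/
abbrev Rp (p : ℕ) : Type :=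
  Polynomial (ZMod 2) ⧸ Ideal.span {(Polynomial.X : Polynomial (ZMod 2)) ^ p - 1}

/-- The quotient map F_2[x] → F_2[x]/(x^p - 1). -/
noncomputable def mkp (p : ℕ) : Polynomial (ZMod 2) →+* Rp p := Ideal.Quotient.mk _

/-- The ideal P of even-weight elements of F_2[x]/(x^p-1), generated by x - 1. -/
noncomputable def evenIdeal (p : ℕ) : Ideal (Rp p) :=
  Ideal.span {mkp p (Polynomial.X - 1)}

/-- Multiplication on (the subtype of) an ideal of a commutative ring. -/
noncomputable instance idealMul {R : Type*} [CommRing R] (I : Ideal R) : Mul I :=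
  ⟨fun a b => ⟨a.1 * b.1, I.mul_mem_left a.1 b.2⟩⟩
/-- The map φ sending a binary vector to its tuple of cycle-block polynomials. -/
noncomputable def phiMap (p c f : ℕ) :
    (Idx p c f → ZMod 2) →ₗ[ZMod 2] (Fin c → Rp p) where
  toFun v := fun j => ∑ k : Fin p, v (Sum.inl (j, k)) • (mkp p X) ^ (k : ℕ)
  map_add' := by
    intro a b; funext j
    simp [add_smul, Finset.sum_add_distrib]
  map_smul' := by
    intro r a; funext j
    simp [mul_smul, Finset.smul_sum]

section S
open Polynomial

noncomputable def pb3 : PowerBasis (ZMod 2) (Rp 3) :=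
  AdjoinRoot.powerBasis' (monic_X_pow_sub_C (1 : ZMod 2) (by norm_num))

lemma pb3_dim : pb3.dim = 3 := by
  show ((X:(ZMod 2)[X]) ^ 3 - 1).natDegree = 3
  rw [← C_1]; exact natDegree_X_pow_sub_C

lemma x3 : (mkp 3 X) ^ 3 = 1 := by
  have h : mkp 3 (X ^ 3 - 1) = 0 := by
    simp [mkp, Ideal.Quotient.eq_zero_iff_mem, Ideal.mem_span_singleton]
  rw [map_sub, map_pow, map_one, sub_eq_zero] at h
  exact h

noncomputable def bR : Module.Basis (Fin 3) (ZMod 2) (Rp 3) := pb3.basis.reindex (finCongr pb3_dim)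

lemma bR_apply (k : Fin 3) : bR k = (mkp 3 X) ^ (k : ℕ) := by
  simp [bR, Module.Basis.reindex_apply, PowerBasis.coe_basis]
  rfl

lemma sum_pow_eq_zero (A : Fin 3 → ZMod 2)
    (h : ∑ k : Fin 3, A k • (mkp 3 X) ^ (k : ℕ) = 0) : A = 0 := by
  have hli := Fintype.linearIndependent_iff.mp bR.linearIndependent A
  have : ∑ k : Fin 3, A k • bR k = 0 := by
    simpa only [bR_apply] using h
  funext k; exact hli this k

lemma exists_repr (z : Rp 3) : ∑ k : Fin 3, (bR.repr z k) • (mkp 3 X) ^ (k:ℕ) = z := by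
  conv_rhs => rw [← bR.sum_repr z]
  exact Finset.sum_congr rfl fun k _ => by rw [bR_apply]

noncomputable def ev1 : Rp 3 →+* ZMod 2 :=
  Ideal.Quotient.lift _ (evalRingHom 1) (by
    intro a ha
    rw [Ideal.mem_span_singleton] at ha
    obtain ⟨r, rfl⟩ := ha
    simp)

lemma ev1_mk (q : (ZMod 2)[X]) : ev1 (mkp 3 q) = q.eval 1 := rfl

lemma smul_mk (a : ZMod 2) (z : Rp 3) : a • z = mkp 3 (C a) * z := by
  fin_cases a
  · show (0 : ZMod 2) • z = mkp 3 (C 0) * z; simp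
  · show (1 : ZMod 2) • z = mkp 3 (C 1) * z; simp

lemma mem_evenIdeal_sum (A : Fin 3 → ZMod 2) (h : ∑ k : Fin 3, A k = 0) :
    ∑ k : Fin 3, A k • (mkp 3 X) ^ (k : ℕ) ∈ evenIdeal 3 := by
  have he : ∑ k : Fin 3, A k • (mkp 3 X) ^ (k : ℕ)
      = mkp 3 (∑ k : Fin 3, C (A k) * X ^ (k:ℕ)) := by
    rw [map_sum]
    refine Finset.sum_congr rfl fun k _ => ?_
    rw [smul_mk, map_mul, map_pow]
  rw [he]
  have hroot : ((X:(ZMod 2)[X]) - C 1) ∣ ∑ k : Fin 3, C (A k) * X ^ (k:ℕ) := by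
    rw [dvd_iff_isRoot]
    simp only [IsRoot, eval_finset_sum, eval_mul, eval_pow, eval_C, eval_X, one_pow, mul_one]
    exact h
  obtain ⟨r, hr⟩ := hroot
  rw [hr, map_mul]
  exact Ideal.mul_mem_right _ _ (Ideal.subset_span (by simp [mkp]))

lemma ev1_evenIdeal {z : Rp 3} (h : z ∈ evenIdeal 3) : ev1 z = 0 := by
  rw [evenIdeal, Ideal.mem_span_singleton'] at h
  obtain ⟨a, rfl⟩ := h
  rw [map_mul, ev1_mk]
  simp

end S
section S4
open Polynomial

lemma two_Rp : (2 : Rp 3) = 0 := by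
  rw [show (2:Rp 3) = mkp 3 2 from (map_ofNat (mkp 3) 2).symm,
    show (2 : (ZMod 2)[X]) = 0 from by
      rw [show (2:(ZMod 2)[X]) = C 2 from (map_ofNat C 2).symm,
        show (2 : ZMod 2) = 0 from by decide, map_zero], map_zero]

lemma zmod2_sq : ∀ r : ZMod 2, r * r = r := by decide

lemma prod_identity (A B : Fin 3 → ZMod 2) :
    (A 0 • (1:Rp 3) + A 1 • mkp 3 X + A 2 • (mkp 3 X)^2)
      * (B 0 • (1:Rp 3) + B 1 • mkp 3 X + B 2 • (mkp 3 X)^2)^2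
    = (A 0*B 0 + A 1*B 1 + A 2*B 2) • (1:Rp 3)
      + (A 0*B 2 + A 1*B 0 + A 2*B 1) • mkp 3 X
      + (A 0*B 1 + A 1*B 2 + A 2*B 0) • (mkp 3 X)^2 := by
  have h2 := two_Rp
  simp only [smul_mk, map_add, map_mul]
  set x := mkp 3 X with hxdef
  set a0 := mkp 3 (C (A 0)); set a1 := mkp 3 (C (A 1)); set a2 := mkp 3 (C (A 2))
  set b0 := mkp 3 (C (B 0)); set b1 := mkp 3 (C (B 1)); set b2 := mkp 3 (C (B 2))
  have hx : x^3 = 1 := x3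
  have hb0 : b0 * b0 = b0 := by rw [← map_mul, ← map_mul, zmod2_sq]
  have hb1 : b1 * b1 = b1 := by rw [← map_mul, ← map_mul, zmod2_sq]
  have hb2 : b2 * b2 = b2 := by rw [← map_mul, ← map_mul, zmod2_sq]
  linear_combination
    (a2*b2^2 + 2*a2*b0*b1 + a1*b1^2 + 2*a1*b0*b2 + 2*a0*b1*b2
      + (a2*b1^2 + 2*a2*b0*b2 + 2*a1*b1*b2 + a0*b2^2)*x
      + (2*a2*b1*b2 + a1*b2^2)*x^2 + a2*b2^2*x^3) * hx
    + (a0 + a1*x + a2*x^2) * hb0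
    + (a1 + a2*x + a0*x^2) * hb1
    + (a2 + a0*x + a1*x^2) * hb2
    + (a2*b0*b1 + a1*b0*b2 + a0*b1*b2 + (a2*b0*b2 + a1*b1*b2 + a0*b0*b1)*x
       + (a2*b1*b2 + a1*b0*b1 + a0*b0*b2)*x^2) * h2

end S4
section S5
open Polynomial
open Fin.NatCast

abbrev ι48 := Idx 3 16 0

lemma sum_idx {M : Type*} [AddCommMonoid M] (g : ι48 → M) :
    ∑ i, g i = ∑ j : Fin 16, ∑ k : Fin 3, g (Sum.inl (j,k)) := by
  rw [Fintype.sum_sum_type, Fintype.sum_prod_type]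
  simp

lemma stdPerm_apply (j : Fin 16) (k : Fin 3) :
    stdPerm 3 16 0 (Sum.inl (j,k)) = Sum.inl (j, k+1) := by
  simp [stdPerm, finRotate_succ_apply]

lemma stdPerm_pow (t : ℕ) (j : Fin 16) (k : Fin 3) :
    (stdPerm 3 16 0 ^ t) (Sum.inl (j,k)) = Sum.inl (j, k + (t : Fin 3)) := by
  induction t with
  | zero => simp
  | succ n ih =>
      rw [pow_succ', Equiv.Perm.mul_apply, ih, stdPerm_apply]
      congr 1
      push_cast
      rw [add_assoc]

lemma cyclesum_eq (v : ι48 → ZMod 2) (j : Fin 16) (k : Fin 3) :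
    ∑ t ∈ Finset.range 3, v ((stdPerm 3 16 0 ^ t) (Sum.inl (j,k)))
      = v (Sum.inl (j,0)) + v (Sum.inl (j,1)) + v (Sum.inl (j,2)) := by
  rw [Finset.sum_range_succ, Finset.sum_range_succ, Finset.sum_range_succ,
    Finset.sum_range_zero, stdPerm_pow, stdPerm_pow, stdPerm_pow]
  fin_cases k <;>
    · simp only [Fin.isValue, show ((0:ℕ):Fin 3) = 0 from rfl, show ((1:ℕ):Fin 3) = 1 from rfl,
        show ((2:ℕ):Fin 3) = 2 from rfl, show ((⟨0,by norm_num⟩:Fin 3)) = 0 from rfl,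
        show ((⟨1,by norm_num⟩:Fin 3)) = 1 from rfl, show ((⟨2,by norm_num⟩:Fin 3)) = 2 from rfl,
        show (0+0:Fin 3) = 0 from rfl, show (0+1:Fin 3) = 1 from rfl, show (0+2:Fin 3) = 2 from rfl,
        show (1+0:Fin 3) = 1 from rfl, show (1+1:Fin 3) = 2 from rfl, show (1+2:Fin 3) = 0 from rfl,
        show (2+0:Fin 3) = 2 from rfl, show (2+1:Fin 3) = 0 from rfl, show (2+2:Fin 3) = 1 from rfl]
      ring

lemma mem_evenCode_iff (C : Submodule (ZMod 2) (ι48 → ZMod 2)) (v : ι48 → ZMod 2) :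
    v ∈ evenCode 3 (stdPerm 3 16 0) C ↔ v ∈ C ∧ ∀ j : Fin 16,
      v (Sum.inl (j,0)) + v (Sum.inl (j,1)) + v (Sum.inl (j,2)) = 0 := by
  constructor
  · rintro ⟨h1, h2⟩
    exact ⟨h1, fun j => by rw [← cyclesum_eq v j 0]; exact h2 (Sum.inl (j,0))⟩
  · rintro ⟨h1, h2⟩
    refine ⟨h1, fun i => ?_⟩
    rcases i with ⟨j,k⟩ | l
    · rw [cyclesum_eq]; exact h2 j
    · exact l.elim0

lemma phiMap_apply' (v : ι48 → ZMod 2) (j : Fin 16) :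
    phiMap 3 16 0 v j = v (Sum.inl (j,0)) • (1:Rp 3)
      + v (Sum.inl (j,1)) • mkp 3 Polynomial.X
      + v (Sum.inl (j,2)) • (mkp 3 Polynomial.X)^2 := by
  show ∑ k : Fin 3, v (Sum.inl (j, k)) • (mkp 3 Polynomial.X) ^ (k : ℕ) = _
  rw [Fin.sum_univ_three]
  norm_num

lemma memC_dot (C : Submodule (ZMod 2) (ι48 → ZMod 2)) (hself : C = dualCode C)
    {a b : ι48 → ZMod 2} (ha : a ∈ C) (hb : b ∈ C) : ∑ i, a i * b i = 0 := by
  rw [hself] at ha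
  exact ha b hb

lemma memC_comp_pow (C : Submodule (ZMod 2) (ι48 → ZMod 2))
    (haut : ∀ v, v ∈ C ↔ v ∘ (stdPerm 3 16 0) ∈ C)
    {b : ι48 → ZMod 2} (hb : b ∈ C) (t : ℕ) : b ∘ (stdPerm 3 16 0 ^ t) ∈ C := by
  induction t with
  | zero => simpa using hb
  | succ n ih =>
      have : b ∘ (stdPerm 3 16 0 ^ (n+1)) = (b ∘ (stdPerm 3 16 0 ^ n)) ∘ stdPerm 3 16 0 := by
        funext i; simp [pow_succ, Equiv.Perm.mul_apply]
      rw [this]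
      exact (haut _).mp ih


lemma dot_shift (C : Submodule (ZMod 2) (ι48 → ZMod 2)) (hself : C = dualCode C)
    (haut : ∀ v, v ∈ C ↔ v ∘ (stdPerm 3 16 0) ∈ C)
    {a b : ι48 → ZMod 2} (ha : a ∈ C) (hb : b ∈ C) (t : ℕ) :
    ∑ j : Fin 16, ∑ k : Fin 3, a (Sum.inl (j,k)) * b (Sum.inl (j, k + (t : Fin 3))) = 0 := by
  have h := memC_dot C hself ha (memC_comp_pow C haut hb t)
  rw [sum_idx] at h
  rw [← h]
  refine Finset.sum_congr rfl fun j _ => Finset.sum_congr rfl fun k _ => ?_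
  rw [Function.comp_apply, stdPerm_pow]

lemma herm_eq (a b : ι48 → ZMod 2) :
    ∑ j : Fin 16, (phiMap 3 16 0 a j) * (phiMap 3 16 0 b j)^2
    = (∑ j : Fin 16, (a (Sum.inl (j,0)) * b (Sum.inl (j,0)) + a (Sum.inl (j,1)) * b (Sum.inl (j,1))
        + a (Sum.inl (j,2)) * b (Sum.inl (j,2)))) • (1:Rp 3)
      + (∑ j : Fin 16, (a (Sum.inl (j,0)) * b (Sum.inl (j,2)) + a (Sum.inl (j,1)) * b (Sum.inl (j,0))
        + a (Sum.inl (j,2)) * b (Sum.inl (j,1)))) • mkp 3 Polynomial.X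
      + (∑ j : Fin 16, (a (Sum.inl (j,0)) * b (Sum.inl (j,1)) + a (Sum.inl (j,1)) * b (Sum.inl (j,2))
        + a (Sum.inl (j,2)) * b (Sum.inl (j,0)))) • (mkp 3 Polynomial.X)^2 := by
  rw [Finset.sum_smul, Finset.sum_smul, Finset.sum_smul, ← Finset.sum_add_distrib,
    ← Finset.sum_add_distrib]
  refine Finset.sum_congr rfl fun j _ => ?_
  rw [phiMap_apply' a j, phiMap_apply' b j]
  exact prod_identity (fun k => a (Sum.inl (j,k))) (fun k => b (Sum.inl (j,k)))

lemma herm_zero (C : Submodule (ZMod 2) (ι48 → ZMod 2)) (hself : C = dualCode C)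
    (haut : ∀ v, v ∈ C ↔ v ∘ (stdPerm 3 16 0) ∈ C)
    {a b : ι48 → ZMod 2} (ha : a ∈ C) (hb : b ∈ C) :
    ∑ j : Fin 16, (phiMap 3 16 0 a j) * (phiMap 3 16 0 b j)^2 = 0 := by
  rw [herm_eq]
  have h0 := dot_shift C hself haut ha hb 0
  have h1 := dot_shift C hself haut ha hb 1
  have h2 := dot_shift C hself haut ha hb 2
  simp only [Fin.sum_univ_three,
    show ((0:ℕ):Fin 3) = 0 from rfl, show ((1:ℕ):Fin 3) = 1 from rfl,
    show ((2:ℕ):Fin 3) = 2 from rfl,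
    show (0+0:Fin 3) = 0 from rfl, show (0+1:Fin 3) = 1 from rfl, show (0+2:Fin 3) = 2 from rfl,
    show (1+0:Fin 3) = 1 from rfl, show (1+1:Fin 3) = 2 from rfl, show (1+2:Fin 3) = 0 from rfl,
    show (2+0:Fin 3) = 2 from rfl, show (2+1:Fin 3) = 0 from rfl, show (2+2:Fin 3) = 1 from rfl]
    at h0 h1 h2 ⊢
  rw [h0, h1, h2]
  simp

section DualDim
variable {κ : Type*} [Fintype κ] [DecidableEq κ]

noncomputable def dotDual : (κ → ZMod 2) →ₗ[ZMod 2] Module.Dual (ZMod 2) (κ → ZMod 2) :=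
  (Pi.basisFun (ZMod 2) κ).toDual

lemma dotDual_apply (x c : κ → ZMod 2) : dotDual x c = ∑ i, x i * c i := by
  have hc : c = ∑ i, c i • Pi.basisFun (ZMod 2) κ i := by
    funext t
    simp [Pi.basisFun_apply, Pi.single_apply, Finset.sum_ite_eq]
  conv_lhs => rw [hc]
  rw [dotDual, map_sum]
  simp only [map_smul, smul_eq_mul, Module.Basis.toDual_apply_left, Pi.basisFun_repr]
  exact Finset.sum_congr rfl fun i _ => mul_comm _ _

lemma dotDual_surj : Function.Surjective (dotDual (κ := κ)) := by
  apply (LinearMap.injective_iff_surjective_of_finrank_eq_finrank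
    (by rw [Subspace.dual_finrank_eq])).mp
  intro x y hxy
  funext i
  have := congrArg (fun f => f (Pi.basisFun (ZMod 2) κ i)) hxy
  simpa [dotDual_apply, Pi.basisFun_apply, Pi.single_apply, Finset.sum_ite_eq] using this

lemma finrank_dualCode (D : Submodule (ZMod 2) (κ → ZMod 2)) :
    Module.finrank (ZMod 2) (dualCode D) + Module.finrank (ZMod 2) D = Fintype.card κ := by
  classical
  let g : (κ → ZMod 2) →ₗ[ZMod 2] Module.Dual (ZMod 2) D :=
    D.dualRestrict.comp dotDual
  have hker : LinearMap.ker g = dualCode D := by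
    ext x
    constructor
    · intro hx c hc
      have := congrArg (fun f => f (⟨c, hc⟩ : D)) hx
      simpa [g, dotDual_apply, Submodule.dualRestrict_apply] using this
    · intro hx
      ext c
      simpa [g, dotDual_apply, Submodule.dualRestrict_apply] using hx c.1 c.2
  have hrange : LinearMap.range g = ⊤ := by
    rw [LinearMap.range_eq_top]
    exact (Subspace.dualRestrict_surjective).comp dotDual_surj
  have h := LinearMap.finrank_range_add_finrank_ker g
  rw [hker, hrange] at h
  rw [Module.finrank_pi] at h
  have hdual : Module.finrank (ZMod 2) (⊤ : Submodule (ZMod 2) (Module.Dual (ZMod 2) D))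
      = Module.finrank (ZMod 2) D := by
    rw [finrank_top, Subspace.dual_finrank_eq]
  omega
end DualDim

def sMap : (ι48 → ZMod 2) →ₗ[ZMod 2] (Fin 16 → ZMod 2) where
  toFun v := fun j => v (Sum.inl (j,0)) + v (Sum.inl (j,1)) + v (Sum.inl (j,2))
  map_add' := by intro a b; funext j; simp [Pi.add_apply]; ring
  map_smul' := by intro r a; funext j; simp [Pi.smul_apply, smul_eq_mul]; ring

lemma zmod2_three (r : ZMod 2) : r + r + r = r := by
  have : ∀ s : ZMod 2, s + s + s = s := by decide
  exact this r

lemma sC_selfdual (C : Submodule (ZMod 2) (ι48 → ZMod 2)) (hself : C = dualCode C)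
    (haut : ∀ v, v ∈ C ↔ v ∘ (stdPerm 3 16 0) ∈ C) :
    Submodule.map sMap C = dualCode (Submodule.map sMap C) := by
  apply le_antisymm
  · rintro _ ⟨v, hv, rfl⟩ _ ⟨w, hw, rfl⟩
    have h0 := dot_shift C hself haut hv hw 0
    have h1 := dot_shift C hself haut hv hw 1
    have h2 := dot_shift C hself haut hv hw 2
    simp only [Fin.sum_univ_three,
      show ((0:ℕ):Fin 3) = 0 from rfl, show ((1:ℕ):Fin 3) = 1 from rfl,
      show ((2:ℕ):Fin 3) = 2 from rfl,
      show (0+0:Fin 3) = 0 from rfl, show (0+1:Fin 3) = 1 from rfl, show (0+2:Fin 3) = 2 from rfl,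
      show (1+0:Fin 3) = 1 from rfl, show (1+1:Fin 3) = 2 from rfl, show (1+2:Fin 3) = 0 from rfl,
      show (2+0:Fin 3) = 2 from rfl, show (2+1:Fin 3) = 0 from rfl, show (2+2:Fin 3) = 1 from rfl]
      at h0 h1 h2
    have expand : ∀ j : Fin 16, sMap v j * sMap w j =
        (v (Sum.inl (j,0)) * w (Sum.inl (j,0)) + v (Sum.inl (j,1)) * w (Sum.inl (j,1))
          + v (Sum.inl (j,2)) * w (Sum.inl (j,2)))
        + (v (Sum.inl (j,0)) * w (Sum.inl (j,1)) + v (Sum.inl (j,1)) * w (Sum.inl (j,2))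
          + v (Sum.inl (j,2)) * w (Sum.inl (j,0)))
        + (v (Sum.inl (j,0)) * w (Sum.inl (j,2)) + v (Sum.inl (j,1)) * w (Sum.inl (j,0))
          + v (Sum.inl (j,2)) * w (Sum.inl (j,1))) := by
      intro j
      show (v (Sum.inl (j,0)) + v (Sum.inl (j,1)) + v (Sum.inl (j,2)))
        * (w (Sum.inl (j,0)) + w (Sum.inl (j,1)) + w (Sum.inl (j,2))) = _
      ring
    calc ∑ j, sMap v j * sMap w j = _ := Finset.sum_congr rfl fun j _ => expand j
      _ = 0 := by
          rw [Finset.sum_add_distrib, Finset.sum_add_distrib, h0, h1, h2]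
          simp
  · intro y hy
    set yt : ι48 → ZMod 2 := Sum.elim (fun jk => y jk.1) (fun _ => 0) with hyt
    have hytC : yt ∈ C := by
      rw [hself]
      intro w hw
      have : ∑ i, yt i * w i = ∑ j : Fin 16, y j * sMap w j := by
        rw [sum_idx]
        refine Finset.sum_congr rfl fun j _ => ?_
        rw [Fin.sum_univ_three]
        show y j * _ + y j * _ + y j * _ = y j * (_ + _ + _)
        ring
      rw [this]
      exact hy (sMap w) ⟨w, hw, rfl⟩
    refine ⟨yt, hytC, ?_⟩
    funext j
    show y j + y j + y j = y j
    exact zmod2_three (y j)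

lemma finrank_sC (C : Submodule (ZMod 2) (ι48 → ZMod 2)) (hself : C = dualCode C)
    (haut : ∀ v, v ∈ C ↔ v ∘ (stdPerm 3 16 0) ∈ C) :
    Module.finrank (ZMod 2) (Submodule.map sMap C) = 8 := by
  have h := finrank_dualCode (Submodule.map sMap C)
  rw [← sC_selfdual C hself haut] at h
  simp only [Fintype.card_fin] at h
  omega

noncomputable def eqEv (C : Submodule (ZMod 2) (ι48 → ZMod 2)) :
    LinearMap.ker (sMap ∘ₗ C.subtype) ≃ₗ[ZMod 2] evenCode 3 (stdPerm 3 16 0) C where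
  toFun w := ⟨w.1.1, (mem_evenCode_iff C _).mpr
    ⟨w.1.2, fun j => congrFun (LinearMap.mem_ker.mp w.2) j⟩⟩
  map_add' _ _ := rfl
  map_smul' _ _ := rfl
  invFun v := ⟨⟨v.1, ((mem_evenCode_iff C _).mp v.2).1⟩,
    LinearMap.mem_ker.mpr (funext fun j => ((mem_evenCode_iff C _).mp v.2).2 j)⟩
  left_inv _ := rfl
  right_inv _ := rfl

lemma finrank_evenCode (C : Submodule (ZMod 2) (ι48 → ZMod 2)) (hself : C = dualCode C)
    (hdim : Module.finrank (ZMod 2) C = 24)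
    (haut : ∀ v, v ∈ C ↔ v ∘ (stdPerm 3 16 0) ∈ C) :
    Module.finrank (ZMod 2) (evenCode 3 (stdPerm 3 16 0) C) = 16 := by
  have hrn := LinearMap.finrank_range_add_finrank_ker (sMap ∘ₗ C.subtype)
  have hrange : LinearMap.range (sMap ∘ₗ C.subtype) = Submodule.map sMap C := by
    rw [LinearMap.range_comp, Submodule.range_subtype]
  rw [hrange, hdim, finrank_sC C hself haut] at hrn
  rw [← (eqEv C).finrank_eq]
  omega

lemma phi_zero (v : ι48 → ZMod 2) (h : phiMap 3 16 0 v = 0) : v = 0 := by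
  funext i
  rcases i with ⟨j,k⟩ | l
  · have hj : ∑ m : Fin 3, v (Sum.inl (j, m)) • (mkp 3 Polynomial.X) ^ (m : ℕ) = 0 :=
      congrFun h j
    have := sum_pow_eq_zero (fun m => v (Sum.inl (j, m))) hj
    exact congrFun this k
  · exact l.elim0

lemma phi_inj : Function.Injective (phiMap 3 16 0) := by
  intro a b hab
  have := phi_zero (a - b) (by rw [map_sub, hab, sub_self])
  exact sub_eq_zero.mp this

lemma finrank_image (C : Submodule (ZMod 2) (ι48 → ZMod 2)) (hself : C = dualCode C)
    (hdim : Module.finrank (ZMod 2) C = 24)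
    (haut : ∀ v, v ∈ C ↔ v ∘ (stdPerm 3 16 0) ∈ C) :
    Module.finrank (ZMod 2)
      (Submodule.map (phiMap 3 16 0) (evenCode 3 (stdPerm 3 16 0) C)) = 16 := by
  rw [← (Submodule.equivMapOfInjective _ phi_inj (evenCode 3 (stdPerm 3 16 0) C)).finrank_eq]
  exact finrank_evenCode C hself hdim haut

lemma three_bits (x y z : ZMod 2) (h : x+y+z = 0) :
    ((if x ≠ 0 then 1 else 0) + (if y ≠ 0 then 1 else 0) + (if z ≠ 0 then 1 else 0) : ℕ) ≤ 2 := by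
  have e : ∀ u : ZMod 2, u ≠ 0 → u = 1 := by decide
  split_ifs with h1 h2 h3 <;> try omega
  rw [e x h1, e y h2, e z h3] at h
  exact absurd h (by decide)

lemma wt_le_twice (a : ι48 → ZMod 2)
    (hE : ∀ j : Fin 16, a (Sum.inl (j,0)) + a (Sum.inl (j,1)) + a (Sum.inl (j,2)) = 0) :
    wt a ≤ 2 * (Finset.univ.filter fun j : Fin 16 => phiMap 3 16 0 a j ≠ 0).card := by
  rw [wt, Finset.card_filter, sum_idx]
  have hper : ∀ j : Fin 16, (∑ k : Fin 3, if a (Sum.inl (j,k)) ≠ 0 then 1 else 0)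
      ≤ if phiMap 3 16 0 a j ≠ 0 then 2 else 0 := by
    intro j
    by_cases hu : phiMap 3 16 0 a j = 0
    · have h0 : ∑ k : Fin 3, a (Sum.inl (j,k)) • (mkp 3 Polynomial.X) ^ (k:ℕ) = 0 := hu
      have hz := sum_pow_eq_zero (fun k => a (Sum.inl (j,k))) h0
      have : ∀ k : Fin 3, a (Sum.inl (j,k)) = 0 := fun k => congrFun hz k
      simp [hu, this]
    · rw [if_pos hu, Fin.sum_univ_three]
      exact three_bits _ _ _ (hE j)
  calc ∑ j : Fin 16, ∑ k : Fin 3, (if a (Sum.inl (j,k)) ≠ 0 then 1 else 0)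
      ≤ ∑ j : Fin 16, if phiMap 3 16 0 a j ≠ 0 then 2 else 0 :=
        Finset.sum_le_sum fun j _ => hper j
    _ = 2 * (Finset.univ.filter fun j : Fin 16 => phiMap 3 16 0 a j ≠ 0).card := by
        rw [Finset.sum_ite, Finset.sum_const, Finset.sum_const]
        simp [mul_comm]

lemma ev1_sum (A : Fin 3 → ZMod 2) :
    ev1 (∑ k : Fin 3, A k • (mkp 3 Polynomial.X)^(k:ℕ)) = ∑ k : Fin 3, A k := by
  rw [map_sum]
  refine Finset.sum_congr rfl fun k _ => ?_
  rw [smul_mk, map_mul, map_pow, ev1_mk, ev1_mk]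
  simp

lemma decompose (C : Submodule (ZMod 2) (ι48 → ZMod 2))
    (haut : ∀ v, v ∈ C ↔ v ∘ (stdPerm 3 16 0) ∈ C) {c : ι48 → ZMod 2} (hc : c ∈ C) :
    ∃ e ∈ evenCode 3 (stdPerm 3 16 0) C, ∀ j : Fin 16, ∀ k : Fin 3,
      c (Sum.inl (j,k)) = e (Sum.inl (j,k))
        + (c (Sum.inl (j,0)) + c (Sum.inl (j,1)) + c (Sum.inl (j,2))) := by
  have key : ∀ r s t : ZMod 2, ((s+t) + (t+r) + (r+s) = 0)
      ∧ (r = s + t + (r + s + t)) ∧ (s = t + r + (r + s + t))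
      ∧ (t = r + s + (r + s + t)) := by decide
  refine ⟨c ∘ (stdPerm 3 16 0) + (c ∘ (stdPerm 3 16 0)) ∘ (stdPerm 3 16 0), ?_, ?_⟩
  · rw [mem_evenCode_iff]
    refine ⟨add_mem ((haut c).mp hc) ((haut _).mp ((haut c).mp hc)), fun j => ?_⟩
    simp only [Pi.add_apply, Function.comp_apply, stdPerm_apply,
      show (0+1:Fin 3) = 1 from rfl, show (1+1:Fin 3) = 2 from rfl,
      show (2+1:Fin 3) = 0 from rfl]
    have h := (key (c (Sum.inl (j,0))) (c (Sum.inl (j,1))) (c (Sum.inl (j,2)))).1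
    linear_combination (norm := ring_nf) h - h + h
  · intro j k
    fin_cases k <;>
      simp only [Pi.add_apply, Function.comp_apply, stdPerm_apply, Fin.isValue,
        show ((⟨0,by norm_num⟩:Fin 3)) = 0 from rfl,
        show ((⟨1,by norm_num⟩:Fin 3)) = 1 from rfl,
        show ((⟨2,by norm_num⟩:Fin 3)) = 2 from rfl,
        show (0+1:Fin 3) = 1 from rfl, show (1+1:Fin 3) = 2 from rfl,
        show (2+1:Fin 3) = 0 from rfl]
    · exact (key _ _ _).2.1
    · exact (key _ _ _).2.2.1
    · exact (key _ _ _).2.2.2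

set_option maxHeartbeats 2000000 in
/-- For a binary self-dual [48,24,10] code `C` invariant under the standard fixed-point
free permutation of order 3 (sixteen 3-cycles), the code `C_φ = φ(E_σ(C))` has all its
coordinates in the field P = even-weight subring of F_2[x]/(x³-1) (≅ F_4), is self-dual
under the Hermitian form (u,v) = Σ uᵢvᵢ², has F_4-dimension 8 (i.e. F_2-dimension 16),
and has minimum distance at least 5. -/
theorem statement16
    (C : Submodule (ZMod 2) (Idx 3 16 0 → ZMod 2))
    (hself : C = dualCode C)
    (hdim : Module.finrank (ZMod 2) C = 24)
    (hmin : ∀ v ∈ C, v ≠ 0 → 10 ≤ wt v) (hex : ∃ v ∈ C, wt v = 10)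
    (haut : ∀ v, v ∈ C ↔ v ∘ (stdPerm 3 16 0) ∈ C) :
    (∀ u ∈ Submodule.map (phiMap 3 16 0) (evenCode 3 (stdPerm 3 16 0) C),
      ∀ j, u j ∈ evenIdeal 3) ∧
    (∀ u ∈ Submodule.map (phiMap 3 16 0) (evenCode 3 (stdPerm 3 16 0) C),
      ∀ v ∈ Submodule.map (phiMap 3 16 0) (evenCode 3 (stdPerm 3 16 0) C),
        ∑ j, u j * (v j) ^ 2 = 0) ∧
    (∀ u : Fin 16 → Rp 3, (∀ j, u j ∈ evenIdeal 3) →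
      (∀ v ∈ Submodule.map (phiMap 3 16 0) (evenCode 3 (stdPerm 3 16 0) C),
        ∑ j, u j * (v j) ^ 2 = 0) →
      u ∈ Submodule.map (phiMap 3 16 0) (evenCode 3 (stdPerm 3 16 0) C)) ∧
    Module.finrank (ZMod 2)
      (Submodule.map (phiMap 3 16 0) (evenCode 3 (stdPerm 3 16 0) C)) = 16 ∧
    (∀ u ∈ Submodule.map (phiMap 3 16 0) (evenCode 3 (stdPerm 3 16 0) C),
      u ≠ 0 → 5 ≤ (Finset.univ.filter fun j => u j ≠ 0).card) := by
  refine ⟨?_, ?_, ?_, finrank_image C hself hdim haut, ?_⟩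
  · rintro u ⟨v, hvE, rfl⟩ j
    obtain ⟨hvC, hsum⟩ := (mem_evenCode_iff C v).mp hvE
    exact mem_evenIdeal_sum _ (by rw [Fin.sum_univ_three]; exact hsum j)
  · rintro u ⟨a, haE, rfl⟩ v ⟨b, hbE, rfl⟩
    exact herm_zero C hself haut ((mem_evenCode_iff C a).mp haE).1
      ((mem_evenCode_iff C b).mp hbE).1
  · intro u hI horth
    set a : ι48 → ZMod 2 := Sum.elim (fun jk => bR.repr (u jk.1) jk.2) (fun _ => 0) with ha
    have hphi : phiMap 3 16 0 a = u := by
      funext j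
      show ∑ k : Fin 3, (bR.repr (u j)) k • (mkp 3 Polynomial.X) ^ (k:ℕ) = u j
      exact exists_repr (u j)
    have hsum : ∀ j : Fin 16,
        a (Sum.inl (j,0)) + a (Sum.inl (j,1)) + a (Sum.inl (j,2)) = 0 := by
      intro j
      have h1 : ev1 (u j) = 0 := ev1_evenIdeal (hI j)
      have h2 : ev1 (u j) = ∑ k : Fin 3, a (Sum.inl (j,k)) := by
        rw [← hphi]; exact ev1_sum _
      rw [← Fin.sum_univ_three (fun k : Fin 3 => a (Sum.inl (j,k))), ← h2, h1]
    have haC : a ∈ C := by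
      rw [hself]
      intro c hc
      obtain ⟨e, heE, hdec⟩ := decompose C haut hc
      have horthe := horth (phiMap 3 16 0 e) ⟨e, heE, rfl⟩
      rw [← hphi, herm_eq] at horthe
      have hz := sum_pow_eq_zero
        (![∑ j : Fin 16, (a (Sum.inl (j,0)) * e (Sum.inl (j,0)) + a (Sum.inl (j,1)) * e (Sum.inl (j,1))
            + a (Sum.inl (j,2)) * e (Sum.inl (j,2))),
           ∑ j : Fin 16, (a (Sum.inl (j,0)) * e (Sum.inl (j,2)) + a (Sum.inl (j,1)) * e (Sum.inl (j,0))
            + a (Sum.inl (j,2)) * e (Sum.inl (j,1))),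
           ∑ j : Fin 16, (a (Sum.inl (j,0)) * e (Sum.inl (j,1)) + a (Sum.inl (j,1)) * e (Sum.inl (j,2))
            + a (Sum.inl (j,2)) * e (Sum.inl (j,0)))]) (by
          rw [Fin.sum_univ_three]
          simpa [pow_zero, pow_one, show (((0:Fin 3)):ℕ) = 0 from rfl,
            show (((1:Fin 3)):ℕ) = 1 from rfl, show (((2:Fin 3)):ℕ) = 2 from rfl]
            using horthe)
      have hD0 : (∑ j : Fin 16, (a (Sum.inl (j,0)) * e (Sum.inl (j,0))
          + a (Sum.inl (j,1)) * e (Sum.inl (j,1)) + a (Sum.inl (j,2)) * e (Sum.inl (j,2)))) = 0 := by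
        simpa using congrFun hz 0
      rw [sum_idx]
      have perj : ∀ j : Fin 16, ∑ k : Fin 3, a (Sum.inl (j,k)) * c (Sum.inl (j,k))
          = (a (Sum.inl (j,0)) * e (Sum.inl (j,0)) + a (Sum.inl (j,1)) * e (Sum.inl (j,1))
              + a (Sum.inl (j,2)) * e (Sum.inl (j,2)))
            + (a (Sum.inl (j,0)) + a (Sum.inl (j,1)) + a (Sum.inl (j,2)))
              * (c (Sum.inl (j,0)) + c (Sum.inl (j,1)) + c (Sum.inl (j,2))) := by
        intro j
        rw [Fin.sum_univ_three]
        linear_combination a (Sum.inl (j,0)) * hdec j 0 + a (Sum.inl (j,1)) * hdec j 1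
          + a (Sum.inl (j,2)) * hdec j 2
      rw [Finset.sum_congr rfl fun j _ => perj j, Finset.sum_add_distrib, hD0,
        Finset.sum_congr rfl fun j _ => by rw [hsum j, zero_mul]]
      simp
    exact ⟨a, (mem_evenCode_iff C a).mpr ⟨haC, hsum⟩, hphi⟩
  · rintro u ⟨a, haE, rfl⟩ hne
    obtain ⟨haC, hsum⟩ := (mem_evenCode_iff C a).mp haE
    have hane : a ≠ 0 := by rintro rfl; exact hne (map_zero _)
    have h10 := hmin a haC hane
    have hb := wt_le_twice a hsum
    omega
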